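/- Let A be a C*-algebra, Ω = {x_1,…,x_n} a subset of its unit ball, and suppose the linear map Γ : ℓ^n_1 → span Ω sending the i-th standard basis vector to x_i is an isomorphism with ‖Γ^{-1}‖ ≤ K for some K ≥ 1. If φ : A → B is a contractive completely positive map into a C*-algebra B, ψ : B → B(H) is contractive, π : A → B(H) is an isometric representation, and ‖(ψ∘φ)(x) − π(x)‖ < δ for all x ∈ Ω with 0 < δ < K^{-1}, then for all scalars c_1,…,c_n: ‖φ(Σ c_i x_i)‖ ≥ (1 − Kδ)‖Σ c_i x_i‖. In particular the restriction of φ to span Ω is a (1 − Kδ)^{-1}-isomorphism onto its image. -/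

import Mathlib

/-- if `Ω = {x₁,…,xₙ}` lies in the unit ball of a C*-algebra and spans a
copy of `ℓ¹ₙ` with inverse-norm bound `K`, and `(φ, ψ, B)` is a completely positive
approximation of a faithful representation `π` to within `δ < K⁻¹` on `Ω`, then
`‖φ(∑ cᵢ xᵢ)‖ ≥ (1 − Kδ)‖∑ cᵢ xᵢ‖`; together with contractivity of `φ`, its restriction
to `span Ω` is a `(1 − Kδ)⁻¹`-isomorphism onto its image. -/
theorem cpa_restriction_almost_isometric
    (A B : Type*) [CStarAlgebra A] [CStarAlgebra B]
    (H : Type*) [NormedAddCommGroup H] [InnerProductSpace ℂ H] [CompleteSpace H]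
    (n : ℕ) (x : Fin n → A) (hx : ∀ i, ‖x i‖ ≤ 1)
    (K : ℝ) (hK : 1 ≤ K)
    (hGinv : ∀ c : Fin n → ℂ, ∑ i : Fin n, ‖c i‖ ≤ K * ‖∑ i : Fin n, c i • x i‖)
    (φ : A →ₗ[ℂ] B) (hφ : ∀ a, ‖φ a‖ ≤ ‖a‖)
    (hφcp : ∀ (m : ℕ) (M : Matrix (Fin m) (Fin m) A), (∃ N, M = Matrix.conjTranspose N * N) →
      ∃ P : Matrix (Fin m) (Fin m) B, M.map φ = Matrix.conjTranspose P * P)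
    (ψ : B →ₗ[ℂ] (H →L[ℂ] H)) (hψ : ∀ b, ‖ψ b‖ ≤ ‖b‖)
    (π : A →⋆ₐ[ℂ] (H →L[ℂ] H)) (hπ : ∀ a, ‖π a‖ = ‖a‖)
    (δ : ℝ) (hδ0 : 0 < δ) (hδK : δ < K⁻¹)
    (happ : ∀ i, ‖ψ (φ (x i)) - π (x i)‖ < δ) :
    ∀ c : Fin n → ℂ,
      (1 - K * δ) * ‖∑ i : Fin n, c i • x i‖ ≤ ‖φ (∑ i : Fin n, c i • x i)‖ ∧
      ‖φ (∑ i : Fin n, c i • x i)‖ ≤ ‖∑ i : Fin n, c i • x i‖ := by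
  intro c
  set a := ∑ i : Fin n, c i • x i with ha
  refine ⟨?_, hφ a⟩
  have hdiff : ψ (φ a) - π a = ∑ i : Fin n, c i • (ψ (φ (x i)) - π (x i)) := by
    simp [ha, map_sum, map_smul, Finset.sum_sub_distrib, smul_sub]
  have h1 : ‖ψ (φ a) - π a‖ ≤ K * δ * ‖a‖ := by
    rw [hdiff]
    calc ‖∑ i : Fin n, c i • (ψ (φ (x i)) - π (x i))‖
        ≤ ∑ i : Fin n, ‖c i • (ψ (φ (x i)) - π (x i))‖ := norm_sum_le _ _
      _ ≤ ∑ i : Fin n, ‖c i‖ * δ := by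
          refine Finset.sum_le_sum fun i _ => ?_
          rw [norm_smul]
          exact mul_le_mul_of_nonneg_left (happ i).le (norm_nonneg _)
      _ = (∑ i : Fin n, ‖c i‖) * δ := by rw [Finset.sum_mul]
      _ ≤ K * ‖a‖ * δ := mul_le_mul_of_nonneg_right (hGinv c) hδ0.le
      _ = K * δ * ‖a‖ := by ring
  have h2 : ‖a‖ ≤ ‖φ a‖ + K * δ * ‖a‖ := by
    have e1 : ‖π a‖ ≤ ‖ψ (φ a)‖ + ‖ψ (φ a) - π a‖ := by
      calc ‖π a‖ = ‖ψ (φ a) + (π a - ψ (φ a))‖ := by congr 1; abel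
        _ ≤ ‖ψ (φ a)‖ + ‖π a - ψ (φ a)‖ := norm_add_le _ _
        _ = ‖ψ (φ a)‖ + ‖ψ (φ a) - π a‖ := by rw [norm_sub_rev]
    have e2 := hψ (φ a)
    rw [hπ a] at e1
    linarith
  have : (1 - K * δ) * ‖a‖ = ‖a‖ - K * δ * ‖a‖ := by ring
  linarith
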